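/- Let λ_k be a nonzero persistence landscape of a continuous function f : [a,b] → ℝ (with respect to vertical sublevel-set persistence), and let t₀ < t₁ < ⋯ be the t-coordinates of vertices of the graph of λ_k. Define y₀ = t₀ and, recursively, yᵢ = tᵢ if (tᵢ, 0) is a take-off point and yᵢ = 2(tᵢ − yᵢ₋₁/2) otherwise. Then every yᵢ is the y-value of a critical point of f. -/

import Mathlib

open Set

/-- The tent function of a persistence diagram point `(β, δ)`. -/
noncomputable def tent (β δ t : ℝ) : ℝ := max 0 (min (t - β) (δ - t))

/-- The `k`-th largest element of a finite multiset of reals (`k ≥ 1`), or `0`. -/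
noncomputable def kmax (s : Multiset ℝ) (k : ℕ) : ℝ :=
  ((s.sort (· ≤ ·)).reverse).getD (k - 1) 0

/-- The `k`-th persistence landscape of a finite diagram `D` (`k ≥ 1`). -/
noncomputable def landscape (D : Multiset (ℝ × ℝ)) (k : ℕ) (t : ℝ) : ℝ :=
  kmax (D.map fun p => tent p.1 p.2 t) k

/-- The set of critical values (`y`-values of critical points) of `f` on `[a,b]`. -/
def CritVal (f : ℝ → ℝ) (a b : ℝ) : Set ℝ :=
  {y | ∃ x ∈ Set.Icc a b,
    (IsLocalMaxOn f (Set.Icc a b) x ∨ IsLocalMinOn f (Set.Icc a b) x) ∧ f x = y}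

/-- `(t, 0)` is a take-off point of `g`: `g` vanishes just before `t` and is nonzero
just after. -/
def TakeOff (g : ℝ → ℝ) (t : ℝ) : Prop :=
  ∃ ε > 0, (∀ s, t - ε < s → s ≤ t → g s = 0) ∧ ∀ s, t < s → s < t + ε → g s ≠ 0

/-- `t` is a vertex of the graph of `g`: `g` is not affine on any neighbourhood of `t`. -/
def VertexOf (g : ℝ → ℝ) (t : ℝ) : Prop :=
  ¬ ∃ ε > 0, ∃ c d : ℝ, ∀ s, |s - t| < ε → g s = c * s + d

theorem kmax_coe_sorted (l : List ℝ) (hl : l.Pairwise (fun a b => b ≤ a)) (k : ℕ) :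
    kmax (↑l) k = l.getD (k-1) 0 := by
  unfold kmax
  have h1 : Multiset.sort (↑l) (· ≤ ·) = l.reverse := by
    apply List.Perm.eq_of_pairwise' (r := (· ≤ ·))
    · exact Multiset.pairwise_sort _ _
    · rw [List.pairwise_reverse]
      exact hl.imp (fun h => h)
    · exact ((Multiset.coe_eq_coe).mp (by rw [Multiset.sort_eq])).trans l.reverse_perm.symm
  rw [h1, List.reverse_reverse]

theorem kmax_mem_or_zero (s : Multiset ℝ) (k : ℕ) : kmax s k ∈ s ∨ kmax s k = 0 := by
  unfold kmax
  rcases lt_or_ge (k-1) ((s.sort (· ≤ ·)).reverse).length with h | h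
  · left
    rw [List.getD_eq_getElem _ _ h]
    have := List.getElem_mem h
    rw [List.mem_reverse, Multiset.mem_sort] at this
    exact this
  · right; exact List.getD_eq_default _ _ h

theorem kmax_nonneg (s : Multiset ℝ) (k : ℕ) (h : ∀ x ∈ s, 0 ≤ x) : 0 ≤ kmax s k := by
  rcases kmax_mem_or_zero s k with h1 | h1
  · exact h _ h1
  · rw [h1]

theorem kmax_eq_zero (s : Multiset ℝ) (k : ℕ) (h : ∀ x ∈ s, x = 0) : kmax s k = 0 := by
  rcases kmax_mem_or_zero s k with h1 | h1
  · exact h _ h1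
  · exact h1

theorem exists_sorted_cons {α : Type*} (R : α → α → Prop) (htrans : Transitive R)
    (a : α) : ∀ (l : List α), l.Pairwise R → (∀ b ∈ l, R a b ∨ R b a) →
    ∃ l', (a :: l).Perm l' ∧ l'.Pairwise R := by
  intro l
  induction l with
  | nil => exact fun _ _ => ⟨[a], List.Perm.refl _, List.pairwise_singleton _ _⟩
  | cons b tl ih =>
    intro hp htot
    rcases htot b (by simp) with hab | hba
    · refine ⟨a :: b :: tl, List.Perm.refl _, ?_⟩
      rw [List.pairwise_cons]
      refine ⟨?_, hp⟩
      intro c hc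
      rcases List.mem_cons.mp hc with rfl | hc
      · exact hab
      · exact htrans hab ((List.pairwise_cons.mp hp).1 c hc)
    · obtain ⟨l', hperm, hl'⟩ := ih (List.pairwise_cons.mp hp).2
        (fun c hc => htot c (by simp [hc]))
      refine ⟨b :: l', ?_, ?_⟩
      · exact (List.Perm.swap b a tl).trans (hperm.cons b)
      · rw [List.pairwise_cons]
        refine ⟨?_, hl'⟩
        intro c hc
        have hc' : c ∈ a :: tl := (hperm.mem_iff).mpr hc
        rcases List.mem_cons.mp hc' with rfl | hc'
        · exact hba
        · exact (List.pairwise_cons.mp hp).1 c hc'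

theorem exists_sorted_perm {α : Type*} (R : α → α → Prop) (htrans : Transitive R) :
    ∀ (l : List α), (∀ a ∈ l, ∀ b ∈ l, R a b ∨ R b a) →
    ∃ l', l.Perm l' ∧ l'.Pairwise R := by
  intro l
  induction l with
  | nil => exact fun _ => ⟨[], List.Perm.refl _, List.Pairwise.nil⟩
  | cons a tl ih =>
    intro htot
    obtain ⟨l', hperm, hl'⟩ := ih (fun x hx y hy => htot x (by simp [hx]) y (by simp [hy]))
    obtain ⟨l'', hperm'', hl''⟩ := exists_sorted_cons R htrans a l' hl'
      (fun b hb => htot a (by simp) b (by simp [hperm.mem_iff.mpr hb]))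
    exact ⟨l'', (hperm.cons a).trans hperm'', hl''⟩





/-- coordinates of the diagram -/
noncomputable def coordsF (D : Multiset (ℝ × ℝ)) : Finset ℝ :=
  D.toFinset.image Prod.fst ∪ D.toFinset.image Prod.snd

/-- corner abscissas -/
noncomputable def XF (D : Multiset (ℝ × ℝ)) : Finset ℝ :=
  (coordsF D ×ˢ coordsF D).image (fun p => (p.1 + p.2) / 2)

theorem mem_XF {D : Multiset (ℝ × ℝ)} {x y : ℝ} (hx : x ∈ coordsF D) (hy : y ∈ coordsF D) :
    (x + y) / 2 ∈ XF D := by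
  apply Finset.mem_image.mpr
  exact ⟨(x, y), Finset.mem_product.mpr ⟨hx, hy⟩, rfl⟩

theorem self_mem_XF {D : Multiset (ℝ × ℝ)} {x : ℝ} (hx : x ∈ coordsF D) : x ∈ XF D := by
  have := mem_XF hx hx
  rwa [show (x + x)/2 = x by ring] at this

theorem fst_mem_coordsF {D : Multiset (ℝ × ℝ)} {p : ℝ × ℝ} (hp : p ∈ D) : p.1 ∈ coordsF D :=
  Finset.mem_union_left _ (Finset.mem_image.mpr ⟨p, Multiset.mem_toFinset.mpr hp, rfl⟩)

theorem snd_mem_coordsF {D : Multiset (ℝ × ℝ)} {p : ℝ × ℝ} (hp : p ∈ D) : p.2 ∈ coordsF D :=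
  Finset.mem_union_right _ (Finset.mem_image.mpr ⟨p, Multiset.mem_toFinset.mpr hp, rfl⟩)

-- tent is affine on an interval avoiding the corner set
/-- admissible affine forms -/
def Form (D : Multiset (ℝ × ℝ)) (c d : ℝ) : Prop :=
  (c = 1 ∧ -d ∈ coordsF D) ∨ (c = -1 ∧ d ∈ coordsF D) ∨ (c = 0 ∧ d = 0)

theorem tent_formula {D : Multiset (ℝ × ℝ)} {p : ℝ × ℝ} (hp : p ∈ D) (hplt : p.1 < p.2)
    {t₀ t₁ : ℝ} (hX : ∀ x ∈ XF D, x ∉ Ioo t₀ t₁) :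
    ∃ c d : ℝ, (∀ s ∈ Icc t₀ t₁, tent p.1 p.2 s = c * s + d) ∧ Form D c d := by
  have hc1 : p.1 ∈ coordsF D := fst_mem_coordsF hp
  have hc2 : p.2 ∈ coordsF D := snd_mem_coordsF hp
  obtain ⟨β, δ⟩ := p
  simp only at hc1 hc2
  unfold Form
  simp only at hplt ⊢
  have hβ : β ∉ Ioo t₀ t₁ := hX _ (self_mem_XF (fst_mem_coordsF hp))
  have hδ : δ ∉ Ioo t₀ t₁ := hX _ (self_mem_XF (snd_mem_coordsF hp))
  have hm : (β + δ)/2 ∉ Ioo t₀ t₁ := hX _ (mem_XF (fst_mem_coordsF hp) (snd_mem_coordsF hp))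
  rcases le_or_gt t₁ β with h | h
  · -- tent = 0 on [t₀, t₁]
    refine ⟨0, 0, fun s hs => ?_, Or.inr (Or.inr ⟨rfl, rfl⟩)⟩
    have : s - β ≤ 0 := by linarith [hs.2]
    simp only [tent]
    rw [max_eq_left]
    · ring
    · exact le_trans (min_le_left _ _) this
  · have hβ0 : β ≤ t₀ := by
      by_contra hc
      exact hβ ⟨lt_of_not_ge hc, h⟩
    rcases le_or_gt t₁ ((β + δ)/2) with h2 | h2
    · -- tent = s - β
      refine ⟨1, -β, fun s hs => ?_, Or.inl ⟨rfl, by rw [neg_neg]; exact hc1⟩⟩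
      simp only [tent]
      rw [min_eq_left (by linarith [hs.2]), max_eq_right (by linarith [hs.1])]
      ring
    · have hm0 : (β + δ)/2 ≤ t₀ := by
        by_contra hc
        exact hm ⟨lt_of_not_ge hc, h2⟩
      rcases le_or_gt t₁ δ with h3 | h3
      · -- tent = δ - s
        refine ⟨-1, δ, fun s hs => ?_, Or.inr (Or.inl ⟨rfl, hc2⟩)⟩
        simp only [tent]
        rw [min_eq_right (by linarith [hs.1]), max_eq_right (by linarith [hs.2])]
        ring
      · have hδ0 : δ ≤ t₀ := by
          by_contra hc
          exact hδ ⟨lt_of_not_ge hc, h3⟩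
        refine ⟨0, 0, fun s hs => ?_, Or.inr (Or.inr ⟨rfl, rfl⟩)⟩
        simp only [tent]
        rw [max_eq_left]
        · ring
        · exact le_trans (min_le_right _ _) (by linarith [hs.1])

theorem affine_cmp {c d c' d' t₀ t₁ : ℝ}
    (hz : c ≠ c' → (d' - d)/(c - c') ≤ t₀ ∨ t₁ ≤ (d' - d)/(c - c')) :
    (∀ s ∈ Icc t₀ t₁, c * s + d ≤ c' * s + d') ∨
    (∀ s ∈ Icc t₀ t₁, c' * s + d' ≤ c * s + d) := by
  by_cases hcc : c = c'
  · subst hcc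
    rcases le_total d d' with h | h
    · exact Or.inl (fun s _ => by linarith)
    · exact Or.inr (fun s _ => by linarith)
  · have hne : c - c' ≠ 0 := sub_ne_zero.mpr hcc
    set z := (d' - d)/(c - c') with hzdef
    have key : ∀ s : ℝ, c * s + d - (c' * s + d') = (c - c') * (s - z) := by
      intro s
      have : (c - c') * z = d' - d := by
        rw [hzdef]; field_simp
      nlinarith [this]
    rcases hz hcc with h | h
    · rcases le_total c c' with hc | hc
      · refine Or.inl (fun s hs => ?_)
        nlinarith [key s, hs.1]
      · refine Or.inr (fun s hs => ?_)
        nlinarith [key s, hs.1]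
    · rcases le_total c c' with hc | hc
      · refine Or.inr (fun s hs => ?_)
        nlinarith [key s, hs.2]
      · refine Or.inl (fun s hs => ?_)
        nlinarith [key s, hs.2]

theorem notIoo {t₀ t₁ z : ℝ} (h : z ∉ Ioo t₀ t₁) : z ≤ t₀ ∨ t₁ ≤ z := by
  by_contra hc
  push_neg at hc
  exact h ⟨hc.1, hc.2⟩

theorem forms_comparable {D : Multiset (ℝ × ℝ)} {t₀ t₁ : ℝ}
    (hX : ∀ x ∈ XF D, x ∉ Ioo t₀ t₁) {c d c' d' : ℝ}
    (h1 : Form D c d) (h2 : Form D c' d') :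
    (∀ s ∈ Icc t₀ t₁, c * s + d ≤ c' * s + d') ∨
    (∀ s ∈ Icc t₀ t₁, c' * s + d' ≤ c * s + d) := by
  apply affine_cmp
  intro hcc
  have key : ∀ z ∈ XF D, (d' - d)/(c - c') = z → (d' - d)/(c - c') ≤ t₀ ∨ t₁ ≤ (d' - d)/(c - c') := by
    intro z hzX hzeq
    rw [hzeq]
    exact notIoo (hX z hzX)
  rcases h1 with ⟨rfl, hm⟩ | ⟨rfl, hm⟩ | ⟨rfl, rfl⟩ <;>
    rcases h2 with ⟨rfl, hm'⟩ | ⟨rfl, hm'⟩ | ⟨rfl, rfl⟩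
  · exact absurd rfl hcc
  · exact key _ (mem_XF hm hm') (by ring_nf)
  · exact key _ (self_mem_XF hm) (by ring_nf)
  · exact key _ (mem_XF hm hm') (by ring_nf)
  · exact absurd rfl hcc
  · exact key _ (self_mem_XF hm) (by ring_nf)
  · exact key _ (self_mem_XF hm') (by ring_nf)
  · exact key _ (self_mem_XF hm') (by ring_nf)
  · exact absurd rfl hcc

theorem landscape_formula {D : Multiset (ℝ × ℝ)} (hD' : ∀ p ∈ D, p.1 < p.2) (k : ℕ)
    {t₀ t₁ : ℝ} (h01 : t₀ < t₁) (hX : ∀ x ∈ XF D, x ∉ Ioo t₀ t₁) :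
    ∃ c d : ℝ, (∀ s ∈ Icc t₀ t₁, landscape D k s = c * s + d) ∧ Form D c d := by
  classical
  set R : (ℝ × ℝ) → (ℝ × ℝ) → Prop :=
    fun p q => ∀ s ∈ Icc t₀ t₁, tent q.1 q.2 s ≤ tent p.1 p.2 s with hR
  have htrans : Transitive R := by
    intro p q r hpq hqr s hs
    exact le_trans (hqr s hs) (hpq s hs)
  have hl : (↑D.toList : Multiset (ℝ × ℝ)) = D := D.coe_toList
  have htot : ∀ p ∈ D.toList, ∀ q ∈ D.toList, R p q ∨ R q p := by
    intro p hp q hq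
    rw [Multiset.mem_toList] at hp hq
    obtain ⟨cp, dp, hfp, hFp⟩ := tent_formula hp (hD' p hp) hX
    obtain ⟨cq, dq, hfq, hFq⟩ := tent_formula hq (hD' q hq) hX
    rcases forms_comparable hX hFp hFq with h | h
    · exact Or.inr (fun s hs => by rw [hfp s hs, hfq s hs]; exact h s hs)
    · exact Or.inl (fun s hs => by rw [hfp s hs, hfq s hs]; exact h s hs)
  obtain ⟨l', hperm, hpair⟩ := exists_sorted_perm R htrans D.toList htot
  have hl' : (↑l' : Multiset (ℝ × ℝ)) = D := by
    rw [← hl]; exact Multiset.coe_eq_coe.mpr hperm.symm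
  have hland : ∀ s ∈ Icc t₀ t₁, landscape D k s =
      (l'.map (fun p => tent p.1 p.2 s)).getD (k - 1) 0 := by
    intro s hs
    have hmap : D.map (fun p => tent p.1 p.2 s) = ↑(l'.map (fun p => tent p.1 p.2 s)) := by
      rw [← hl']; rfl
    rw [landscape, hmap]
    apply kmax_coe_sorted
    refine List.Pairwise.map _ ?_ hpair
    intro p q hpq
    exact hpq s hs
  by_cases hkl : k - 1 < l'.length
  · set p := l'[k-1] with hp
    have hpD : p ∈ D := by
      rw [← hl']
      exact Multiset.mem_coe.mpr (List.getElem_mem hkl)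
    obtain ⟨c, d, hf, hF⟩ := tent_formula hpD (hD' p hpD) hX
    refine ⟨c, d, fun s hs => ?_, hF⟩
    rw [hland s hs, List.getD_eq_getElem _ _ (by simpa using hkl), List.getElem_map]
    exact hf s hs
  · refine ⟨0, 0, fun s hs => ?_, Or.inr (Or.inr ⟨rfl, rfl⟩)⟩
    rw [hland s hs, List.getD_eq_default _ _ (by simpa using le_of_not_gt hkl)]
    ring

theorem exists_right_gap (D : Multiset (ℝ × ℝ)) (r : ℝ) :
    ∃ ε > 0, ∀ x ∈ XF D, x ∉ Ioo r (r + ε) := by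
  classical
  set G := (XF D).filter (fun x => r < x) with hG
  by_cases hne : G.Nonempty
  · refine ⟨G.min' hne - r, ?_, ?_⟩
    · have := (Finset.mem_filter.mp (G.min'_mem hne)).2
      simpa using this
    · intro x hx hmem
      have hrx : r < x := hmem.1
      have : G.min' hne ≤ x := G.min'_le x (Finset.mem_filter.mpr ⟨hx, hrx⟩)
      have := hmem.2
      linarith
  · refine ⟨1, one_pos, fun x hx hmem => ?_⟩
    exact hne ⟨x, Finset.mem_filter.mpr ⟨hx, hmem.1⟩⟩

theorem exists_left_gap (D : Multiset (ℝ × ℝ)) (r : ℝ) :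
    ∃ ε > 0, ∀ x ∈ XF D, x ∉ Ioo (r - ε) r := by
  classical
  set G := (XF D).filter (fun x => x < r) with hG
  by_cases hne : G.Nonempty
  · refine ⟨r - G.max' hne, ?_, ?_⟩
    · have := (Finset.mem_filter.mp (G.max'_mem hne)).2
      simpa using this
    · intro x hx hmem
      have hrx : x < r := hmem.2
      have : x ≤ G.max' hne := G.le_max' x (Finset.mem_filter.mpr ⟨hx, hrx⟩)
      have := hmem.1
      linarith
  · refine ⟨1, one_pos, fun x hx hmem => ?_⟩
    exact hne ⟨x, Finset.mem_filter.mpr ⟨hx, hmem.2⟩⟩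

theorem landscape_nonneg (D : Multiset (ℝ × ℝ)) (k : ℕ) (s : ℝ) : 0 ≤ landscape D k s := by
  apply kmax_nonneg
  intro x hx
  obtain ⟨p, _, rfl⟩ := Multiset.mem_map.mp hx
  exact le_max_left _ _

theorem landscape_zero_left (D : Multiset (ℝ × ℝ)) (k : ℕ) {s : ℝ}
    (h : ∀ p ∈ D, s ≤ p.1) : landscape D k s = 0 := by
  apply kmax_eq_zero
  intro x hx
  obtain ⟨p, hp, rfl⟩ := Multiset.mem_map.mp hx
  have : s - p.1 ≤ 0 := by linarith [h p hp]
  exact max_eq_left (le_trans (min_le_left _ _) this)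

theorem not_vertex_of_affine {g : ℝ → ℝ} {r c d e₁ e₂ : ℝ} (h₁ : 0 < e₁) (h₂ : 0 < e₂)
    (hl : ∀ s ∈ Icc (r - e₁) r, g s = c * s + d)
    (hr : ∀ s ∈ Icc r (r + e₂), g s = c * s + d) : ¬ VertexOf g r := by
  intro hv
  apply hv
  refine ⟨min e₁ e₂, lt_min h₁ h₂, c, d, fun s hs => ?_⟩
  rw [abs_sub_lt_iff] at hs
  rcases le_total s r with h | h
  · exact hl s ⟨by have := hs.2; have := min_le_left e₁ e₂; linarith, h⟩
  · exact hr s ⟨h, by have := hs.1; have := min_le_right e₁ e₂; linarith⟩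

theorem affine_eq_of_eqOn {c d c' d' u v : ℝ} (huv : u < v)
    (h : ∀ s ∈ Icc u v, c * s + d = c' * s + d') : c = c' ∧ d = d' := by
  have h1 := h u ⟨le_refl u, le_of_lt huv⟩
  have h2 := h v ⟨le_of_lt huv, le_refl v⟩
  have hc : c = c' := by
    have key : (c - c') * (u - v) = 0 := by linear_combination h1 - h2
    rcases mul_eq_zero.mp key with h' | h'
    · linarith
    · exfalso; linarith
  exact ⟨hc, by rw [hc] at h1; linarith⟩

theorem extend_affine {D : Multiset (ℝ × ℝ)} (hD' : ∀ p ∈ D, p.1 < p.2) (k : ℕ) :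
    ∀ (m : ℕ) (u w : ℝ), u < w →
    ((XF D).filter (fun x => x ∈ Ioo u w)).card ≤ m →
    (∀ r ∈ Ioo u w, ¬ VertexOf (landscape D k) r) →
    ∀ c d : ℝ, (∃ ε > 0, ∀ s ∈ Icc u (min (u+ε) w), landscape D k s = c * s + d) →
    ∀ s ∈ Icc u w, landscape D k s = c * s + d := by
  classical
  intro m
  induction m with
  | zero =>
    intro u w huw hcard _ c d ⟨ε, hε, hinit⟩
    have hXe : ∀ x ∈ XF D, x ∉ Ioo u w := by
      intro x hx hmem
      have : x ∈ (XF D).filter (fun x => x ∈ Ioo u w) := Finset.mem_filter.mpr ⟨hx, hmem⟩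
      have := Finset.card_pos.mpr ⟨x, this⟩
      omega
    obtain ⟨c₀, d₀, hf, _⟩ := landscape_formula hD' k huw hXe
    have hagree : ∀ s ∈ Icc u (min (u+ε) w), c₀ * s + d₀ = c * s + d := by
      intro s hs
      rw [← hf s ⟨hs.1, le_trans hs.2 (min_le_right _ _)⟩, hinit s hs]
    have := affine_eq_of_eqOn (lt_min (by linarith) huw) hagree
    intro s hs
    rw [hf s hs, this.1, this.2]
  | succ m ih =>
    intro u w huw hcard hvf c d ⟨ε, hε, hinit⟩
    set F := (XF D).filter (fun x => x ∈ Ioo u w) with hF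
    by_cases hne : F.Nonempty
    · set x := F.min' hne with hx
      have hxmem := Finset.mem_filter.mp (F.min'_mem hne)
      have hux : u < x := hxmem.2.1
      have hxw : x < w := hxmem.2.2
      -- no corner points in (u, x)
      have hXux : ∀ z ∈ XF D, z ∉ Ioo u x := by
        intro z hz hmem
        have hzF : z ∈ F := Finset.mem_filter.mpr ⟨hz, hmem.1, lt_trans hmem.2 hxw⟩
        have := F.min'_le z hzF
        have := hmem.2
        simp only [← hx] at *
        linarith
      obtain ⟨c₀, d₀, hf, _⟩ := landscape_formula hD' k hux hXux
      have hu' : u < min (min (u+ε) w) x := lt_min (lt_min (by linarith) huw) hux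
      have hagree : ∀ s ∈ Icc u (min (min (u+ε) w) x), c₀ * s + d₀ = c * s + d := by
        intro s hs
        rw [← hf s ⟨hs.1, le_trans hs.2 (min_le_right _ _)⟩,
          hinit s ⟨hs.1, le_trans hs.2 (min_le_left _ _)⟩]
      obtain ⟨hc₀, hd₀⟩ := affine_eq_of_eqOn hu' hagree
      -- λ = c s + d on [u, x]
      have hA : ∀ s ∈ Icc u x, landscape D k s = c * s + d := by
        intro s hs
        rw [hf s hs, hc₀, hd₀]
      -- x is not a vertex
      have hnv := hvf x ⟨hux, hxw⟩
      rw [VertexOf, not_not] at hnv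
      obtain ⟨ε₁, hε₁, c', d', haff⟩ := hnv
      have hagree2 : ∀ s ∈ Icc (max u (x - ε₁/2)) x, c * s + d = c' * s + d' := by
        intro s hs
        have h1 : s ∈ Icc u x := ⟨le_trans (le_max_left _ _) hs.1, hs.2⟩
        have h2 : |s - x| < ε₁ := by
          rw [abs_sub_lt_iff]
          constructor
          · linarith [hs.2]
          · have := le_trans (le_max_right _ _) hs.1
            linarith
        rw [← hA s h1, haff s h2]
      have hmaxlt : max u (x - ε₁/2) < x := max_lt hux (by linarith)
      obtain ⟨hc', hd'⟩ := affine_eq_of_eqOn hmaxlt hagree2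
      -- initial condition at x
      have hinit2 : ∃ ε > 0, ∀ s ∈ Icc x (min (x+ε) w), landscape D k s = c * s + d := by
        refine ⟨ε₁/2, by linarith, fun s hs => ?_⟩
        have h2 : |s - x| < ε₁ := by
          rw [abs_sub_lt_iff]
          constructor
          · have := le_trans hs.2 (min_le_left _ _)
            linarith
          · linarith [hs.1]
        rw [haff s h2, ← hc', ← hd']
      -- card decrease
      have hsub : (XF D).filter (fun z => z ∈ Ioo x w) ⊆ F.erase x := by
        intro z hz
        have hz' := Finset.mem_filter.mp hz
        refine Finset.mem_erase.mpr ⟨ne_of_gt hz'.2.1, ?_⟩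
        exact Finset.mem_filter.mpr ⟨hz'.1, lt_trans hux hz'.2.1, hz'.2.2⟩
      have hcard2 : ((XF D).filter (fun z => z ∈ Ioo x w)).card ≤ m := by
        have h1 := Finset.card_le_card hsub
        have h2 : (F.erase x).card = F.card - 1 := Finset.card_erase_of_mem (F.min'_mem hne)
        omega
      have hB := ih x w hxw hcard2 (fun r hr => hvf r ⟨lt_trans hux hr.1, hr.2⟩) c d hinit2
      intro s hs
      rcases le_total s x with h | h
      · exact hA s ⟨hs.1, h⟩
      · exact hB s ⟨h, hs.2⟩
    · -- no corner points at all: same as base case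
      have hXe : ∀ z ∈ XF D, z ∉ Ioo u w := by
        intro z hz hmem
        exact hne ⟨z, Finset.mem_filter.mpr ⟨hz, hmem⟩⟩
      obtain ⟨c₀, d₀, hf, _⟩ := landscape_formula hD' k huw hXe
      have hagree : ∀ s ∈ Icc u (min (u+ε) w), c₀ * s + d₀ = c * s + d := by
        intro s hs
        rw [← hf s ⟨hs.1, le_trans hs.2 (min_le_right _ _)⟩, hinit s hs]
      have := affine_eq_of_eqOn (lt_min (by linarith) huw) hagree
      intro s hs
      rw [hf s hs, this.1, this.2]

theorem local_right {D : Multiset (ℝ × ℝ)} (hD' : ∀ p ∈ D, p.1 < p.2) (k : ℕ) (r : ℝ) :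
    ∃ ε > 0, ∃ c d : ℝ, (∀ s ∈ Icc r (r + ε), landscape D k s = c * s + d) ∧ Form D c d := by
  obtain ⟨ε, hε, hgap⟩ := exists_right_gap D r
  obtain ⟨c, d, hf, hF⟩ := landscape_formula hD' k (by linarith : r < r + ε) hgap
  exact ⟨ε, hε, c, d, hf, hF⟩

theorem landscape_aux_main (f : ℝ → ℝ) (a b : ℝ) (hab : a ≤ b)
    (hf : ContinuousOn f (Set.Icc a b))
    (D : Multiset (ℝ × ℝ))
    (hD : ∀ p ∈ D, p.1 < p.2 ∧ p.1 ∈ CritVal f a b ∧ p.2 ∈ CritVal f a b)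
    (k : ℕ) (hk : ∃ t, landscape D k t ≠ 0)
    (n : ℕ) (t : Fin (n + 1) → ℝ) (ht : StrictMono t)
    (hvert : ∀ s : ℝ, VertexOf (landscape D k) s ↔ ∃ i, t i = s)
    (y : Fin (n + 1) → ℝ)
    (hy0 : y 0 = t 0)
    (hyT : ∀ i, TakeOff (landscape D k) (t i) → y i = t i)
    (hyR : ∀ i : Fin n, ¬ TakeOff (landscape D k) (t i.succ) →
      y i.succ = 2 * (t i.succ - y i.castSucc / 2)) :
    ∀ i, y i ∈ CritVal f a b := by
  classical
  set g := landscape D k with hg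
  have hD' : ∀ p ∈ D, p.1 < p.2 := fun p hp => (hD p hp).1
  have hcrit : ∀ z ∈ coordsF D, z ∈ CritVal f a b := by
    intro z hz
    rcases Finset.mem_union.mp hz with h | h
    · obtain ⟨p, hp, rfl⟩ := Finset.mem_image.mp h
      exact (hD p (Multiset.mem_toFinset.mp hp)).2.1
    · obtain ⟨p, hp, rfl⟩ := Finset.mem_image.mp h
      exact (hD p (Multiset.mem_toFinset.mp hp)).2.2
  have hDne : D ≠ 0 := by
    rintro rfl
    obtain ⟨s, hs⟩ := hk
    apply hs
    rw [hg]
    simp only [landscape, Multiset.map_zero, kmax, Multiset.sort_zero, List.reverse_nil,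
      List.getD]
    simp
  have hcne : (coordsF D).Nonempty := by
    obtain ⟨p, hp⟩ := Multiset.exists_mem_of_ne_zero hDne
    exact ⟨p.1, fst_mem_coordsF hp⟩
  set m := (coordsF D).min' hcne with hm
  have hzl : ∀ s : ℝ, s ≤ m → g s = 0 := by
    intro s hs
    apply landscape_zero_left
    intro p hp
    exact le_trans (le_trans hs ((coordsF D).min'_le _ (fst_mem_coordsF hp))) (le_refl _)
  -- the invariant
  set Q : Fin (n + 1) → Prop := fun i => y i ∈ CritVal f a b ∧
    ∃ c d ε : ℝ, 0 < ε ∧ (∀ s ∈ Icc (t i) (t i + ε), g s = c * s + d) ∧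
      ((c = 1 ∧ y i = -d) ∨ (c = -1 ∧ y i = d) ∨ (c = 0 ∧ d = 0 ∧ y i = t i)) with hQ
  have key : ∀ i, Q i := by
    apply Fin.induction
    · -- base case
      simp only [hQ]
      have hV0 : VertexOf g (t 0) := (hvert (t 0)).mpr ⟨0, rfl⟩
      set u := min (m - 1) (t 0 - 1) with hu
      have hu0 : u < t 0 := lt_of_le_of_lt (min_le_right _ _) (by linarith)
      have huinit : ∃ ε > 0, ∀ s ∈ Icc u (min (u + ε) (t 0)), g s = 0 * s + 0 := by
        refine ⟨1, one_pos, fun s hs => ?_⟩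
        have hum : u ≤ m - 1 := min_le_left _ _
        have h1 : s ≤ m := by
          have := le_trans hs.2 (min_le_left _ _)
          linarith
        rw [hzl s h1]; ring
      have hvf : ∀ r ∈ Ioo u (t 0), ¬ VertexOf g r := by
        intro r hr hv
        obtain ⟨j, hj⟩ := (hvert r).mp hv
        have h2 : t 0 ≤ t j := ht.monotone (Fin.zero_le j)
        rw [hj] at h2
        linarith [hr.2]
      have hseg0 : ∀ s ∈ Icc u (t 0), g s = 0 * s + 0 :=
        extend_affine hD' k ((XF D).card) u (t 0) hu0 (Finset.card_filter_le _ _) hvf 0 0 huinit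
      obtain ⟨ε₁, hε₁, c', d', hright, hF'⟩ := local_right hD' k (t 0)
      rw [← hg] at hright
      have hv0 : g (t 0) = 0 := by
        have := hseg0 (t 0) ⟨le_of_lt hu0, le_refl _⟩
        linarith [this]
      have hveq : c' * t 0 + d' = 0 := by
        rw [← hright (t 0) ⟨le_refl _, by linarith⟩, hv0]
      rcases hF' with ⟨hc', hd'⟩ | ⟨hc', hd'⟩ | ⟨hc', hd'⟩
      · subst hc'
        have hd0 : -d' = t 0 := by linarith [hveq]
        refine ⟨?_, 1, d', ε₁, hε₁, hright, Or.inl ⟨rfl, by rw [hy0, ← hd0]⟩⟩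
        rw [hy0, ← hd0]
        exact hcrit _ hd'
      · exfalso
        subst hc'
        have hd0 : d' = t 0 := by linarith [hveq]
        have hnn := landscape_nonneg D k (t 0 + ε₁ / 2)
        rw [← hg, hright (t 0 + ε₁/2) ⟨by linarith, by linarith⟩, hd0] at hnn
        linarith
      · exfalso
        subst hc'; subst hd'
        refine not_vertex_of_affine (show (0:ℝ) < t 0 - u by linarith) hε₁
          (fun s hs => hseg0 s ⟨by linarith [hs.1], hs.2⟩) hright hV0
    · -- inductive step
      intro i hQi
      simp only [hQ] at hQi ⊢
      obtain ⟨hycrit, c, d, ε₀, hε₀, hfirst, hform⟩ := hQi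
      set a₀ := t i.castSucc with ha₀
      set a₁ := t i.succ with ha₁
      have h01 : a₀ < a₁ := ht (Fin.castSucc_lt_succ (i := i))
      have hvf : ∀ r ∈ Ioo a₀ a₁, ¬ VertexOf g r := by
        intro r hr hv
        obtain ⟨j, hj⟩ := (hvert r).mp hv
        rcases le_or_gt j i.castSucc with h | h
        · have h2 := ht.monotone h
          rw [hj] at h2
          linarith [hr.1]
        · have h2 : i.succ ≤ j := by
            rwa [Fin.castSucc_lt_iff_succ_le] at h
          have h3 := ht.monotone h2
          rw [hj] at h3
          linarith [hr.2]
      have hseg : ∀ s ∈ Icc a₀ a₁, g s = c * s + d :=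
        extend_affine hD' k ((XF D).card) a₀ a₁ h01 (Finset.card_filter_le _ _) hvf c d
          ⟨ε₀, hε₀, fun s hs => hfirst s ⟨hs.1, le_trans hs.2 (min_le_left _ _)⟩⟩
      have hV1 : VertexOf g a₁ := (hvert a₁).mpr ⟨i.succ, rfl⟩
      obtain ⟨ε₁, hε₁, c', d', hright, hF'⟩ := local_right hD' k a₁
      rw [← hg] at hright
      have hveq : c * a₁ + d = c' * a₁ + d' := by
        rw [← hseg a₁ ⟨le_of_lt h01, le_refl _⟩, ← hright a₁ ⟨le_refl _, by linarith⟩]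
      have hdiff : ¬ (c = c' ∧ d = d') := by
        rintro ⟨rfl, rfl⟩
        exact not_vertex_of_affine (show (0:ℝ) < a₁ - a₀ by linarith) hε₁
          (fun s hs => hseg s ⟨by linarith [hs.1], hs.2⟩) hright hV1
      by_cases hTO : TakeOff g a₁
      · have hy1 : y i.succ = a₁ := hyT i.succ hTO
        obtain ⟨εT, hεT, hTl, hTr⟩ := hTO
        have hv0 : g a₁ = 0 := hTl a₁ (by linarith) (le_refl _)
        have hveq' : c' * a₁ + d' = 0 := by
          rw [← hright a₁ ⟨le_refl _, by linarith⟩, hv0]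
        rcases hF' with ⟨hc', hd'⟩ | ⟨hc', hd'⟩ | ⟨hc', hd'⟩
        · subst hc'
          have hd0 : -d' = a₁ := by linarith [hveq']
          refine ⟨?_, 1, d', ε₁, hε₁, hright, Or.inl ⟨rfl, by rw [hy1, ← hd0]⟩⟩
          rw [hy1, ← hd0]
          exact hcrit _ hd'
        · exfalso
          subst hc'
          have hd0 : d' = a₁ := by linarith [hveq']
          have hnn := landscape_nonneg D k (a₁ + ε₁ / 2)
          rw [← hg, hright (a₁ + ε₁/2) ⟨by linarith, by linarith⟩, hd0] at hnn
          linarith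
        · exfalso
          subst hc'; subst hd'
          have hmin : (0:ℝ) < min ε₁ εT / 2 := by
            have := lt_min hε₁ hεT
            linarith
          refine hTr (a₁ + min ε₁ εT / 2) (by linarith) ?_ ?_
          · linarith [min_le_right ε₁ εT]
          · rw [hright _ ⟨by linarith, by linarith [min_le_left ε₁ εT]⟩]
            ring
      · have hy1 : y i.succ = 2 * (a₁ - y i.castSucc / 2) := hyR i hTO
        rcases hform with ⟨hc, hyd⟩ | ⟨hc, hyd⟩ | ⟨hc, hd, hyd⟩
        · -- up segment: c = 1, y₀ = -d
          subst hc
          rcases hF' with ⟨hc', hd'⟩ | ⟨hc', hd'⟩ | ⟨hc', hd'⟩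
          · exfalso
            subst hc'
            exact hdiff ⟨rfl, by linarith [hveq]⟩
          · subst hc'
            have hd2 : y i.succ = d' := by
              rw [hy1]
              linarith [hveq, hyd]
            refine ⟨?_, -1, d', ε₁, hε₁, hright, Or.inr (Or.inl ⟨rfl, hd2⟩)⟩
            rw [hd2]
            exact hcrit _ hd'
          · subst hc'; subst hd'
            have hy2 : y i.succ = a₁ := by
              rw [hy1]
              linarith [hveq, hyd]
            have hy3 : a₁ = y i.castSucc := by linarith [hveq, hyd]
            refine ⟨?_, 0, 0, ε₁, hε₁, hright, Or.inr (Or.inr ⟨rfl, rfl, hy2⟩)⟩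
            rw [hy2, hy3]
            exact hycrit
        · -- down segment: c = -1, y₀ = d
          subst hc
          rcases hF' with ⟨hc', hd'⟩ | ⟨hc', hd'⟩ | ⟨hc', hd'⟩
          · subst hc'
            have hd2 : y i.succ = -d' := by
              rw [hy1]
              linarith [hveq, hyd]
            refine ⟨?_, 1, d', ε₁, hε₁, hright, Or.inl ⟨rfl, hd2⟩⟩
            rw [hd2]
            exact hcrit _ hd'
          · exfalso
            subst hc'
            exact hdiff ⟨rfl, by linarith [hveq]⟩
          · subst hc'; subst hd'
            have hy2 : y i.succ = a₁ := by
              rw [hy1]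
              linarith [hveq, hyd]
            have hy3 : a₁ = y i.castSucc := by linarith [hveq, hyd]
            refine ⟨?_, 0, 0, ε₁, hε₁, hright, Or.inr (Or.inr ⟨rfl, rfl, hy2⟩)⟩
            rw [hy2, hy3]
            exact hycrit
        · -- flat segment: c = 0, d = 0
          subst hc; subst hd
          rcases hF' with ⟨hc', hd'⟩ | ⟨hc', hd'⟩ | ⟨hc', hd'⟩
          · exfalso
            subst hc'
            apply hTO
            have hd0 : -d' = a₁ := by linarith [hveq]
            refine ⟨min ε₁ (a₁ - a₀), lt_min hε₁ (by linarith), fun s hs1 hs2 => ?_,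
              fun s hs1 hs2 => ?_⟩
            · have h3 : a₀ ≤ s := by
                have := min_le_right ε₁ (a₁ - a₀)
                linarith
              rw [hseg s ⟨h3, hs2⟩]
              ring
            · rw [hright s ⟨le_of_lt hs1, by linarith [min_le_left ε₁ (a₁ - a₀)]⟩]
              intro hzero
              have : s = -d' := by linarith
              linarith [hd0 ▸ this]
          · exfalso
            subst hc'
            have hd0 : d' = a₁ := by linarith [hveq]
            have hnn := landscape_nonneg D k (a₁ + ε₁ / 2)
            rw [← hg, hright (a₁ + ε₁/2) ⟨by linarith, by linarith⟩, hd0] at hnn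
            linarith
          · exact absurd ⟨hc'.symm, hd'.symm⟩ hdiff
  exact fun i => (key i).1

/-- let `λ_k` be a nonzero persistence landscape of a continuous
`f : [a,b] → ℝ` with respect to vertical sublevel-set persistence (whose diagram `D`
has all coordinates equal to critical values of `f`), and let `t 0 < t 1 < ⋯` be the
`t`-coordinates of the vertices of the graph of `λ_k`. Define `y 0 = t 0` and
recursively `y i = t i` if `(t i, 0)` is a take-off point and `y i = 2(t i − y (i−1)/2)`
otherwise. Then every `y i` is the `y`-value of a critical point of `f`. -/
theorem landscape_vertices_give_critical_values (f : ℝ → ℝ) (a b : ℝ) (hab : a ≤ b)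
    (hf : ContinuousOn f (Set.Icc a b))
    (D : Multiset (ℝ × ℝ))
    (hD : ∀ p ∈ D, p.1 < p.2 ∧ p.1 ∈ CritVal f a b ∧ p.2 ∈ CritVal f a b)
    (k : ℕ) (hk : ∃ t, landscape D k t ≠ 0)
    (n : ℕ) (t : Fin (n + 1) → ℝ) (ht : StrictMono t)
    (hvert : ∀ s : ℝ, VertexOf (landscape D k) s ↔ ∃ i, t i = s)
    (y : Fin (n + 1) → ℝ)
    (hy0 : y 0 = t 0)
    (hyT : ∀ i, TakeOff (landscape D k) (t i) → y i = t i)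
    (hyR : ∀ i : Fin n, ¬ TakeOff (landscape D k) (t i.succ) →
      y i.succ = 2 * (t i.succ - y i.castSucc / 2)) :
    ∀ i, y i ∈ CritVal f a b :=
  landscape_aux_main f a b hab hf D hD k hk n t ht hvert y hy0 hyT hyR
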